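/- The four smallest values among fundamental units (greater than 1) of real quadratic fields ℚ(√m), m square-free, are (1+√5)/2, 1+√2, (3+√13)/2, and 2+√3, attained at m = 5, 2, 13, 3 respectively. In particular, if m is a square-free integer with m ∉ {2, 3, 5, 13}, then the fundamental unit v_m > 1 of ℚ(√m) satisfies v_m > 2 + √3. -/

import Mathlib

open NumberField Polynomial


lemma rat_int_of_sq (m : ℤ) (hsf : Squarefree m) (q : ℚ) (z : ℤ)
    (h : (m : ℚ) * q ^ 2 = (z : ℚ)) : ∃ c : ℤ, (c : ℚ) = q := by
  refine ⟨q.num, ?_⟩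
  have hd : q.den = 1 := by
    have h1 : (m : ℚ) * (q.num : ℚ) ^ 2 = (z : ℚ) * (q.den : ℚ) ^ 2 := by
      have := Rat.num_div_den q
      rw [← this] at h
      have hden : (q.den : ℚ) ≠ 0 := by exact_mod_cast q.den_nz
      field_simp at h
      linarith [h]
    have h2 : m * q.num ^ 2 = z * (q.den : ℤ) ^ 2 := by exact_mod_cast h1
    have hdvd : (q.den : ℤ) ^ 2 ∣ m * q.num ^ 2 := ⟨z, by linarith [h2]⟩
    have hcop : IsCoprime (q.num : ℤ) (q.den : ℤ) := by
      rw [Int.isCoprime_iff_gcd_eq_one]; exact q.reduced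
    have hdvd2 : (q.den : ℤ) ^ 2 ∣ m :=
      IsCoprime.dvd_of_dvd_mul_right (hcop.symm.pow) hdvd
    have : IsUnit ((q.den : ℤ)) := hsf _ (by rwa [← pow_two])
    rcases Int.isUnit_iff.mp this with h | h
    · exact_mod_cast h
    · exfalso
      have : (0:ℤ) < (q.den : ℤ) := by exact_mod_cast q.pos
      omega
  exact ((Rat.den_eq_one_iff q).mp hd)

lemma no_rat_sqrt (m : ℤ) (hm : 1 < m) (hsf : Squarefree m) (r : ℚ) :
    r ^ 2 ≠ (m : ℚ) := by
  intro h
  have hm0 : (m : ℚ) ≠ 0 := by positivity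
  have h1 : (m : ℚ) * (r / m) ^ 2 = ((1 : ℤ) : ℚ) := by
    push_cast; field_simp; rw [h]
  obtain ⟨c, hc⟩ := rat_int_of_sq m hsf (r / m) 1 h1
  have hr : r = c * m := by
    field_simp at hc; linarith [hc]
  rw [hr] at h
  have : (c^2 * m : ℚ) = 1 := by
    have h2 : ((c:ℚ) * m)^2 = m := h
    field_simp at h2 ⊢
    nlinarith [h2]
  have h3 : (c^2 * m : ℤ) = 1 := by exact_mod_cast this
  have : (m : ℤ) ∣ 1 := ⟨c^2, by linarith⟩
  have := Int.le_of_dvd one_pos this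
  omega

lemma indep_sqrt (m : ℤ) (hm : 1 < m) (hsf : Squarefree m) (p q : ℚ)
    (h : (p : ℝ) + (q : ℝ) * Real.sqrt m = 0) : p = 0 ∧ q = 0 := by
  have hm0 : (0:ℝ) ≤ (m:ℝ) := by positivity
  by_cases hq : q = 0
  · subst hq; simp at h; exact ⟨by exact_mod_cast h, rfl⟩
  · exfalso
    have hs : Real.sqrt m = ((-p/q : ℚ) : ℝ) := by
      have hq' : (q:ℝ) ≠ 0 := by exact_mod_cast hq
      push_cast
      field_simp
      linarith [h]
    have : ((-p/q : ℚ) : ℝ)^2 = (m:ℝ) := by rw [← hs]; exact Real.sq_sqrt hm0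
    have : ((-p/q : ℚ))^2 = (m:ℚ) := by exact_mod_cast this
    exact no_rat_sqrt m hm hsf _ this



lemma mem_repr (m : ℤ) (hm : 1 < m) (hsf : Squarefree m)
    (K : IntermediateField ℚ ℝ) (hK : K = IntermediateField.adjoin ℚ {Real.sqrt m})
    (x : K) : ∃ p q : ℚ, (x : ℝ) = (p : ℝ) + (q : ℝ) * Real.sqrt m := by
  have hm0 : (0:ℝ) ≤ (m:ℝ) := by positivity
  have hsq : Real.sqrt m * Real.sqrt m = (m:ℝ) := Real.mul_self_sqrt hm0
  set S : Subfield ℝ :=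
    { carrier := {x : ℝ | ∃ p q : ℚ, x = (p : ℝ) + (q : ℝ) * Real.sqrt m}
      one_mem' := ⟨1, 0, by push_cast; ring⟩
      zero_mem' := ⟨0, 0, by push_cast; ring⟩
      add_mem' := by
        rintro a b ⟨p, q, rfl⟩ ⟨p', q', rfl⟩
        exact ⟨p + p', q + q', by push_cast; ring⟩
      neg_mem' := by
        rintro a ⟨p, q, rfl⟩
        exact ⟨-p, -q, by push_cast; ring⟩
      mul_mem' := by
        rintro a b ⟨p, q, rfl⟩ ⟨p', q', rfl⟩
        refine ⟨p * p' + q * q' * m, p * q' + q * p', ?_⟩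
        push_cast
        linear_combination ((q:ℝ) * q') * hsq
      inv_mem' := by
        rintro a ⟨p, q, rfl⟩
        by_cases h0 : (p : ℝ) + (q : ℝ) * Real.sqrt m = 0
        · rw [h0]; exact ⟨0, 0, by simp⟩
        · have hd : (p:ℚ)^2 - m * q^2 ≠ 0 := by
            intro hd
            apply h0
            have hq : ((p:ℝ) - q * Real.sqrt m) ≠ 0 ∨ ((p:ℝ) + q * Real.sqrt m) = 0 := by
              by_cases h1 : ((p:ℝ) - q * Real.sqrt m) = 0
              · right
                have h2 := indep_sqrt m hm hsf p (-q) (by push_cast; linarith [h1])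
                obtain ⟨hp0, hq0⟩ := h2
                simp [hp0, neg_eq_zero.mp hq0]
              · left; exact h1
            rcases hq with h1 | h1
            · exfalso
              have hprod : ((p:ℝ) + q * Real.sqrt m) * ((p:ℝ) - q * Real.sqrt m) = (p:ℝ)^2 - m * q^2 := by
                nlinarith [hsq]
              have : ((p:ℚ)^2 - m*q^2 : ℚ) = 0 := hd
              have hzero : ((p:ℝ)^2 - m * q^2) = 0 := by exact_mod_cast this
              rw [hzero] at hprod
              rcases mul_eq_zero.mp hprod with h2 | h2
              · exact h0 h2
              · exact h1 h2
            · exact h1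
          refine ⟨p / (p^2 - m*q^2), -q / (p^2 - m*q^2), ?_⟩
          have hdr : ((p:ℝ)^2 - m * q^2) ≠ 0 := by
            intro hz; apply hd; exact_mod_cast hz
          refine (eq_inv_of_mul_eq_one_left ?_).symm
          push_cast
          field_simp
          linear_combination (-(q:ℝ)^2) * hsq }
  have hxS : (x : ℝ) ∈ S := by
    have : (K : Set ℝ) ⊆ S := by
      rw [hK]
      intro y hy
      have : y ∈ Subfield.closure (Set.range (algebraMap ℚ ℝ) ∪ {Real.sqrt m}) := hy
      refine Subfield.closure_le.mpr ?_ this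
      rintro z (⟨r, rfl⟩ | hz)
      · exact ⟨r, 0, by push_cast; simp⟩
      · rcases hz with rfl
        exact ⟨0, 1, by push_cast; simp⟩
    exact this x.2
  exact hxS



lemma quadPoly_natDegree (c1 c0 : ℚ) : (X^2 - C c1 * X + C c0).natDegree = 2 := by
  compute_degree!

lemma quadPoly_monic (c1 c0 : ℚ) : (X^2 - C c1 * X + C c0).Monic := by
  apply Polynomial.monic_of_natDegree_le_of_coeff_eq_one 2
  · rw [quadPoly_natDegree]
  · simp [coeff_C]

lemma quadPoly_coeff1 (c1 c0 : ℚ) : (X^2 - C c1 * X + C c0).coeff 1 = -c1 := by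
  simp [coeff_C]

lemma quadPoly_coeff0 (c1 c0 : ℚ) : (X^2 - C c1 * X + C c0).coeff 0 = c0 := by
  simp [coeff_C]

lemma quadPoly_aeval (c1 c0 : ℚ) (x : ℝ) :
    Polynomial.aeval x (X^2 - C c1 * X + C c0) = x^2 - (c1 : ℝ) * x + (c0 : ℝ) := by
  simp only [map_add, map_sub, map_mul, map_pow, aeval_X, aeval_C]
  rw [eq_ratCast (algebraMap ℚ ℝ), eq_ratCast (algebraMap ℚ ℝ)]

lemma quad_coeffs (m : ℤ) (hm : 1 < m) (hsf : Squarefree m) (x : ℝ)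
    (hint : IsIntegral ℤ x) (p q : ℚ) (hq : q ≠ 0)
    (hrepr : x = (p : ℝ) + (q : ℝ) * Real.sqrt m) :
    ∃ a n : ℤ, (a : ℚ) = 2 * p ∧ (n : ℚ) = p ^ 2 - m * q ^ 2 := by
  have hm0 : (0:ℝ) ≤ (m:ℝ) := by positivity
  have hsq : Real.sqrt m * Real.sqrt m = (m:ℝ) := Real.mul_self_sqrt hm0
  set P : ℚ[X] := X ^ 2 - C (2 * p) * X + C (p ^ 2 - m * q ^ 2) with hP
  have hPmonic : P.Monic := quadPoly_monic _ _
  have hPdeg : P.natDegree = 2 := quadPoly_natDegree _ _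
  have hPauxroot : x^2 - ((2*p : ℚ) : ℝ) * x + ((p^2 - m*q^2 : ℚ) : ℝ) = 0 := by
    rw [hrepr]; push_cast; linear_combination ((q:ℝ)^2) * hsq
  have hPnum : Polynomial.aeval x P = 0 := by
    rw [hP, quadPoly_aeval]; exact hPauxroot
  have hdvd : minpoly ℚ x ∣ P := minpoly.dvd ℚ x hPnum
  have hint' : IsIntegral ℚ x := hint.tower_top
  have hmono : (minpoly ℚ x).Monic := minpoly.monic hint'
  have hdeg2 : 2 ≤ (minpoly ℚ x).natDegree := by
    by_contra hlt
    push_neg at hlt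
    have hpos := minpoly.natDegree_pos hint'
    have h1 : (minpoly ℚ x).natDegree = 1 := by omega
    have : x ∈ (algebraMap ℚ ℝ).range := by
      rw [← minpoly.degree_eq_one_iff]
      rw [Polynomial.degree_eq_natDegree (minpoly.ne_zero hint'), h1]
      rfl
    obtain ⟨r, hr⟩ := this
    have hx : ((p - r : ℚ) : ℝ) + (q : ℝ) * Real.sqrt m = 0 := by
      rw [eq_ratCast (algebraMap ℚ ℝ)] at hr
      push_cast
      rw [← hr] at hrepr
      linarith [hrepr]
    exact hq (indep_sqrt m hm hsf _ _ hx).2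
  have hPne : P ≠ 0 := hPmonic.ne_zero
  obtain ⟨c, hc⟩ := hdvd
  have hcne : c ≠ 0 := by rintro rfl; rw [mul_zero] at hc; exact hPne hc
  have hdegsum : (minpoly ℚ x).natDegree + c.natDegree = 2 := by
    rw [← Polynomial.natDegree_mul (minpoly.ne_zero hint') hcne, ← hc, hPdeg]
  have hcdeg : c.natDegree = 0 := by omega
  have hcC : c = C (c.coeff 0) := Polynomial.eq_C_of_natDegree_eq_zero hcdeg
  have hlead : c.coeff 0 = 1 := by
    have h2 := congrArg Polynomial.leadingCoeff hc
    rw [Polynomial.leadingCoeff_mul, hmono.leadingCoeff, hPmonic.leadingCoeff, one_mul] at h2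
    rw [hcC] at h2
    simpa using h2.symm
  have hPeq : minpoly ℚ x = P := by
    rw [hc, hcC, hlead]; simp
  have key := minpoly.isIntegrallyClosed_eq_field_fractions' ℚ hint
  refine ⟨-(minpoly ℤ x).coeff 1, (minpoly ℤ x).coeff 0, ?_, ?_⟩
  · have h1 : (minpoly ℚ x).coeff 1 = -(2*p) := by rw [hPeq, hP, quadPoly_coeff1]
    rw [key, Polynomial.coeff_map] at h1
    have h2 : ((minpoly ℤ x).coeff 1 : ℚ) = -(2*p) := by exact_mod_cast h1
    push_cast
    linarith [h2]
  · have h0 : (minpoly ℚ x).coeff 0 = p^2 - m*q^2 := by rw [hPeq, hP, quadPoly_coeff0]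
    rw [key, Polynomial.coeff_map] at h0
    exact_mod_cast h0






lemma key_struct' (m : ℤ) (hm : 1 < m) (hsf : Squarefree m)
    (x y : ℝ) (hxint : IsIntegral ℤ x) (hyint : IsIntegral ℤ y)
    (hxy : x * y = 1) (hw : (1:ℝ) < x)
    (hxK : ∃ p q : ℚ, x = (p : ℝ) + (q : ℝ) * Real.sqrt m) :
    ∃ a b : ℤ, 1 ≤ a ∧ 1 ≤ b ∧ (a^2 - m*b^2 = 4 ∨ a^2 - m*b^2 = -4) ∧
      x = ((a:ℝ) + (b:ℝ) * Real.sqrt m)/2 := by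
  have hm0 : (0:ℝ) ≤ (m:ℝ) := by positivity
  have hsq : Real.sqrt m * Real.sqrt m = (m:ℝ) := Real.mul_self_sqrt hm0
  have hsqpos : 0 < Real.sqrt m := Real.sqrt_pos.mpr (by exact_mod_cast zero_lt_one.trans hm)
  obtain ⟨p, q, hrepr⟩ := hxK
  have hxpos : 0 < x := lt_trans one_pos hw
  have hq : q ≠ 0 := by
    intro hq0
    subst hq0
    push_cast at hrepr
    simp only [zero_mul, add_zero] at hrepr
    have hxq : IsIntegral ℤ (p : ℚ) := by
      have h0 := hxint
      rw [hrepr, show ((p:ℝ)) = algebraMap ℚ ℝ p from (eq_ratCast (algebraMap ℚ ℝ) p).symm] at h0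
      rwa [isIntegral_algebraMap_iff (algebraMap ℚ ℝ).injective] at h0
    obtain ⟨z, hz⟩ := IsIntegrallyClosed.isIntegral_iff.mp hxq
    rw [eq_intCast] at hz
    have hp0 : (p:ℝ) ≠ 0 := by rw [← hrepr]; positivity
    have hp0' : p ≠ 0 := by intro h0; apply hp0; rw [h0]; norm_num
    have hyq : y = ((1/p : ℚ) : ℝ) := by
      push_cast
      field_simp
      rw [← hrepr]
      linear_combination hxy
    have hyint' : IsIntegral ℤ ((1/p : ℚ)) := by
      have h0 := hyint
      rw [hyq, show (((1/p : ℚ):ℝ)) = algebraMap ℚ ℝ (1/p) from (eq_ratCast _ _).symm] at h0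
      rwa [isIntegral_algebraMap_iff (algebraMap ℚ ℝ).injective] at h0
    obtain ⟨z', hz'⟩ := IsIntegrallyClosed.isIntegral_iff.mp hyint'
    rw [eq_intCast] at hz'
    have hzz : (z : ℚ) * (z' : ℚ) = 1 := by rw [hz, hz']; field_simp
    have hzz' : z * z' = 1 := by exact_mod_cast hzz
    have hz1 : z = 1 ∨ z = -1 := Int.isUnit_iff.mp (IsUnit.of_mul_eq_one _ hzz')
    have hxz : x = ((z:ℚ):ℝ) := by rw [hrepr, hz]
    rcases hz1 with h1 | h1 <;> rw [h1] at hxz <;> push_cast at hxz <;> linarith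
  obtain ⟨a, n, ha, hn⟩ := quad_coeffs m hm hsf x hxint p q hq hrepr
  have hxx' : x * ((p:ℝ) - (q:ℝ) * Real.sqrt m) = (n:ℝ) := by
    rw [hrepr]
    have hnr : ((n:ℝ)) = (p:ℝ)^2 - (m:ℝ) * (q:ℝ)^2 := by exact_mod_cast hn
    rw [hnr]
    linear_combination (-(q:ℝ)^2) * hsq
  have hn0 : n ≠ 0 := by
    intro h0
    rw [h0] at hxx'
    push_cast at hxx'
    rcases mul_eq_zero.mp hxx' with h1 | h1
    · linarith
    · have h2 := indep_sqrt m hm hsf p (-q) (by push_cast; linarith)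
      exact hq (neg_eq_zero.mp h2.2)
  have hnr0 : (n:ℝ) ≠ 0 := by exact_mod_cast hn0
  have hyx' : y = ((p:ℝ) - (q:ℝ) * Real.sqrt m) / n := by
    have hxne : x ≠ 0 := ne_of_gt hxpos
    field_simp
    rw [show y * (n:ℝ) = y * (x * ((p:ℝ) - (q:ℝ)*Real.sqrt m)) from by rw [hxx']]
    linear_combination ((p:ℝ) - (q:ℝ)*Real.sqrt m) * hxy
  have hyrepr : y = ((p/n : ℚ) : ℝ) + ((-q/n : ℚ):ℝ) * Real.sqrt m := by
    rw [hyx']; push_cast; ring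
  have hnq : (n:ℚ) ≠ 0 := by exact_mod_cast hn0
  have hqn : (-q/n : ℚ) ≠ 0 := div_ne_zero (neg_ne_zero.mpr hq) hnq
  obtain ⟨a', n', ha', hn'⟩ := quad_coeffs m hm hsf y hyint (p/n) (-q/n) hqn hyrepr
  have hnn' : n * n' = 1 := by
    have h2 : ((n':ℚ)) * (n:ℚ)^2 = (n:ℚ) := by
      rw [hn']
      field_simp
      linear_combination (-1 : ℚ) * hn
    have h3 : (n:ℚ) * ((n:ℚ) * (n':ℚ)) = (n:ℚ) * 1 := by rw [mul_one]; linear_combination h2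
    have h4 := mul_left_cancel₀ hnq h3
    exact_mod_cast h4
  have hn1 : n = 1 ∨ n = -1 := Int.isUnit_iff.mp (IsUnit.of_mul_eq_one _ hnn')
  have hb : (m:ℚ) * (2*q)^2 = ((a^2 - 4*n : ℤ) : ℚ) := by
    push_cast
    linear_combination (-((a:ℚ) + 2*p)) * ha + (4:ℚ) * hn
  obtain ⟨b, hbq⟩ := rat_int_of_sq m hsf (2*q) (a^2 - 4*n) hb
  have hrel : a^2 - m * b^2 = 4*n := by
    have h5 : ((a^2 - m*b^2 : ℤ) : ℚ) = ((4*n : ℤ) : ℚ) := by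
      push_cast
      rw [hbq]
      linear_combination ((a:ℚ) + 2*p) * ha + (-4:ℚ) * hn
    exact_mod_cast h5
  have hx'bound : |(p:ℝ) - (q:ℝ)*Real.sqrt m| < 1 := by
    have h6 : (p:ℝ) - (q:ℝ)*Real.sqrt m = (n:ℝ) / x := by
      field_simp
      linear_combination hxx'
    rw [h6, abs_div]
    have hn1' : |(n:ℝ)| = 1 := by rcases hn1 with h | h <;> rw [h] <;> norm_num
    rw [hn1', abs_of_pos hxpos, div_lt_one hxpos]
    exact hw
  obtain ⟨hxl, hxr2⟩ := abs_lt.mp hx'bound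
  have hsum : x + ((p:ℝ) - (q:ℝ)*Real.sqrt m) = 2*(p:ℝ) := by rw [hrepr]; ring
  have hdiff : x - ((p:ℝ) - (q:ℝ)*Real.sqrt m) = 2*(q:ℝ)*Real.sqrt m := by rw [hrepr]; ring
  have hapos : 1 ≤ a := by
    have h1 : (0:ℝ) < 2*(p:ℝ) := by linarith
    have h2 : (0:ℚ) < p := by
      have : (0:ℝ) < (p:ℝ) := by linarith
      exact_mod_cast this
    have h3 : (0:ℚ) < (a:ℚ) := by rw [ha]; linarith
    have : (0:ℤ) < a := by exact_mod_cast h3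
    omega
  have hbpos : 1 ≤ b := by
    have h1 : (0:ℝ) < 2*(q:ℝ)*Real.sqrt m := by linarith
    have hqpos : (0:ℝ) < (q:ℝ) := by nlinarith
    have h2 : (0:ℚ) < q := by exact_mod_cast hqpos
    have h3 : (0:ℚ) < (b:ℚ) := by rw [hbq]; linarith
    have : (0:ℤ) < b := by exact_mod_cast h3
    omega
  refine ⟨a, b, hapos, hbpos, ?_, ?_⟩
  · rcases hn1 with h | h <;> rw [h] at hrel
    · left; linarith
    · right; linarith
  · have h1 : (a:ℝ) = 2*(p:ℝ) := by exact_mod_cast ha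
    have h2 : (b:ℝ) = 2*(q:ℝ) := by exact_mod_cast hbq
    rw [hrepr, h1, h2]
    ring



-- the ring hom from 𝓞 K to ℝ
noncomputable def OKtoR (K : IntermediateField ℚ ℝ) : (𝓞 K) →+* ℝ :=
  (K.val.toRingHom).comp (algebraMap (𝓞 K) K)

lemma OKtoR_apply (K : IntermediateField ℚ ℝ) (x : 𝓞 K) :
    OKtoR K x = ((x : K) : ℝ) := rfl

lemma v_le (K : IntermediateField ℚ ℝ) (v : (𝓞 K)ˣ)
    (hv : (1:ℝ) < (((v : 𝓞 K) : K) : ℝ))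
    (hfund : ∀ w : (𝓞 K)ˣ, ∃ k : ℤ, w = v ^ k ∨ w = -v ^ k)
    (u : (𝓞 K)ˣ) (hu : (1:ℝ) < (((u : 𝓞 K) : K) : ℝ)) :
    (((v : 𝓞 K) : K) : ℝ) ≤ (((u : 𝓞 K) : K) : ℝ) := by
  obtain ⟨k, hk | hk⟩ := hfund u
  · have h1 : OKtoR K ((u : 𝓞 K)) = OKtoR K (((v ^ k : (𝓞 K)ˣ) : 𝓞 K)) := by rw [hk]
    have h2 : ((Units.map (OKtoR K).toMonoidHom) (v ^ k) : ℝ)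
        = ((Units.map (OKtoR K).toMonoidHom v : ℝˣ) : ℝ) ^ k := by
      rw [map_zpow]
      exact Units.val_zpow_eq_zpow_val _ _
    have h3 : OKtoR K ((u : 𝓞 K)) = (OKtoR K ((v : 𝓞 K))) ^ k := by
      rw [h1]
      exact h2
    rw [OKtoR_apply, OKtoR_apply] at h3
    have hk1 : 1 ≤ k := by
      by_contra hneg
      push_neg at hneg
      have : (((v : 𝓞 K) : K) : ℝ) ^ k ≤ 1 :=
        zpow_le_one_of_nonpos₀ hv.le (by omega)
      rw [← h3] at this
      linarith
    calc (((v : 𝓞 K) : K) : ℝ) ≤ (((v : 𝓞 K) : K) : ℝ) ^ k.toNat := by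
          apply le_self_pow₀ hv.le
          omega
      _ = (((v : 𝓞 K) : K) : ℝ) ^ k := by
          rw [← zpow_natCast, Int.toNat_of_nonneg (by omega)]
      _ = (((u : 𝓞 K) : K) : ℝ) := h3.symm
  · exfalso
    have h1 : OKtoR K ((u : 𝓞 K)) = OKtoR K (((-v ^ k : (𝓞 K)ˣ) : 𝓞 K)) := by rw [hk]
    rw [Units.val_neg, (OKtoR K).map_neg] at h1
    have h2 : OKtoR K (((v ^ k : (𝓞 K)ˣ) : 𝓞 K)) = (OKtoR K ((v : 𝓞 K))) ^ k := by
      have := congrArg (Units.val) (map_zpow (Units.map (OKtoR K).toMonoidHom) v k)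
      rw [Units.val_zpow_eq_zpow_val] at this
      exact this
    rw [h2] at h1
    have hpos : (0:ℝ) < (OKtoR K ((v : 𝓞 K))) ^ k := by
      apply zpow_pos
      rw [OKtoR_apply]
      linarith
    rw [OKtoR_apply] at h1
    linarith



lemma quadPolyZ_monic (c1 c0 : ℤ) : (X^2 - C c1 * X + C c0).Monic := by
  have h : (X^2 - C c1 * X + C c0 : ℤ[X]).natDegree ≤ 2 := by compute_degree
  apply Polynomial.monic_of_natDegree_le_of_coeff_eq_one 2 h
  rw [coeff_add, coeff_sub, coeff_X_pow, mul_comm, coeff_mul_C, coeff_X, coeff_C]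
  norm_num

lemma quadPolyZ_aeval_real (c1 c0 : ℤ) (x : ℝ) :
    Polynomial.aeval x (X^2 - C c1 * X + C c0) = x^2 - (c1 : ℝ) * x + (c0 : ℝ) := by
  simp only [map_add, map_sub, map_mul, map_pow, aeval_X, aeval_C]
  rw [eq_intCast (algebraMap ℤ ℝ), eq_intCast (algebraMap ℤ ℝ)]

lemma exists_unit (m : ℤ) (hm : 1 < m)
    (K : IntermediateField ℚ ℝ) (hK : K = IntermediateField.adjoin ℚ {Real.sqrt m})
    (a b n : ℤ) (hn : n = 1 ∨ n = -1) (hrel : a^2 - m*b^2 = 4*n) :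
    ∃ u : (𝓞 K)ˣ, (((u : 𝓞 K) : K) : ℝ) = ((a:ℝ) + (b:ℝ) * Real.sqrt m)/2 := by
  have hm0 : (0:ℝ) ≤ (m:ℝ) := by positivity
  have hsq : Real.sqrt m * Real.sqrt m = (m:ℝ) := Real.mul_self_sqrt hm0
  have hsm : Real.sqrt m ∈ K := by
    rw [hK]
    exact IntermediateField.subset_adjoin ℚ {Real.sqrt m} rfl
  set sm : K := ⟨Real.sqrt m, hsm⟩ with hsm'
  set tK : K := ((a : K) + (b : K) * sm)/2 with htK
  set cK : K := ((a : K) - (b : K) * sm)/2 with hcK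
  have hcoe_t : (tK : ℝ) = ((a:ℝ) + (b:ℝ) * Real.sqrt m)/2 := by
    rw [htK]; push_cast; rfl
  have hcoe_c : (cK : ℝ) = ((a:ℝ) - (b:ℝ) * Real.sqrt m)/2 := by
    rw [hcK]; push_cast; rfl
  have hrelR : (a:ℝ)^2 - (m:ℝ)*(b:ℝ)^2 = 4*(n:ℝ) := by exact_mod_cast hrel
  have hinj : Function.Injective (algebraMap K ℝ) := Subtype.coe_injective
  have hroots : ∀ r : ℝ, r = ((a:ℝ) + (b:ℝ) * Real.sqrt m)/2 ∨ r = ((a:ℝ) - (b:ℝ) * Real.sqrt m)/2 →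
      Polynomial.aeval r (X^2 - C a * X + C n) = 0 := by
    rintro r (rfl | rfl) <;>
    · rw [quadPolyZ_aeval_real]
      linear_combination ((b:ℝ)^2/4) * hsq + (-1/4 : ℝ) * hrelR
  have htInt : IsIntegral ℤ tK := by
    rw [← isIntegral_algebraMap_iff hinj]
    refine ⟨X^2 - C a * X + C n, quadPolyZ_monic a n, ?_⟩
    have h0 := hroots (((a:ℝ) + (b:ℝ) * Real.sqrt m)/2) (Or.inl rfl)
    rw [Polynomial.aeval_def] at h0
    rw [show (algebraMap K ℝ) tK = ((a:ℝ) + (b:ℝ) * Real.sqrt m)/2 from hcoe_t]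
    exact h0
  have hcInt : IsIntegral ℤ cK := by
    rw [← isIntegral_algebraMap_iff hinj]
    refine ⟨X^2 - C a * X + C n, quadPolyZ_monic a n, ?_⟩
    have h0 := hroots (((a:ℝ) - (b:ℝ) * Real.sqrt m)/2) (Or.inr rfl)
    rw [Polynomial.aeval_def] at h0
    rw [show (algebraMap K ℝ) cK = ((a:ℝ) - (b:ℝ) * Real.sqrt m)/2 from hcoe_c]
    exact h0
  set T : 𝓞 K := ⟨tK, htInt⟩ with hT
  set Cc : 𝓞 K := ⟨cK, hcInt⟩ with hCc
  have hTCK : (tK : ℝ) * ((n:ℝ) * (cK : ℝ)) = 1 := by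
    rw [hcoe_t, hcoe_c]
    have hn2 : (n:ℝ) * (n:ℝ) = 1 := by rcases hn with h | h <;> rw [h] <;> norm_num
    linear_combination (-(n:ℝ)/4 * (b:ℝ)^2) * hsq + ((n:ℝ)/4) * hrelR + hn2
  have hTC : T * ((n : 𝓞 K) * Cc) = 1 := by
    apply NumberField.RingOfIntegers.ext
    show (algebraMap (𝓞 K) K) (T * ((n : 𝓞 K) * Cc)) = (algebraMap (𝓞 K) K) 1
    rw [map_mul, map_mul, map_intCast, map_one]
    have h2 : (algebraMap (𝓞 K) K) T = tK := rfl
    have h3 : (algebraMap (𝓞 K) K) Cc = cK := rfl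
    rw [h2, h3]
    apply hinj
    rw [map_one, map_mul, map_mul]
    rw [show ((algebraMap K ℝ) ((n:K))) = (n:ℝ) from by push_cast; rfl]
    rw [show ((algebraMap K ℝ) tK) = (tK:ℝ) from rfl, show ((algebraMap K ℝ) cK) = (cK:ℝ) from rfl]
    exact hTCK
  refine ⟨⟨T, (n : 𝓞 K) * Cc, hTC, by rw [mul_comm]; exact hTC⟩, ?_⟩
  exact hcoe_t





lemma key_struct (m : ℤ) (hm : 1 < m) (hsf : Squarefree m)
    (K : IntermediateField ℚ ℝ) (hK : K = IntermediateField.adjoin ℚ {Real.sqrt m})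
    (w : (𝓞 K)ˣ) (hw : (1:ℝ) < (((w : 𝓞 K) : K) : ℝ)) :
    ∃ a b : ℤ, 1 ≤ a ∧ 1 ≤ b ∧ (a^2 - m*b^2 = 4 ∨ a^2 - m*b^2 = -4) ∧
      (((w : 𝓞 K) : K) : ℝ) = ((a:ℝ) + (b:ℝ) * Real.sqrt m)/2 := by
  have hxint : IsIntegral ℤ ((((w : 𝓞 K) : K) : ℝ)) :=
    map_isIntegral_int (K.val : K →ₐ[ℚ] ℝ) (RingOfIntegers.isIntegral_coe _)
  have hyint : IsIntegral ℤ ((((↑(w⁻¹) : 𝓞 K) : K) : ℝ)) :=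
    map_isIntegral_int (K.val : K →ₐ[ℚ] ℝ) (RingOfIntegers.isIntegral_coe _)
  have hxy : (((w : 𝓞 K) : K) : ℝ) * (((↑(w⁻¹) : 𝓞 K) : K) : ℝ) = 1 := by
    have h1 : ((w : 𝓞 K) * (↑(w⁻¹) : 𝓞 K)) = 1 := by
      rw [← Units.val_mul, mul_inv_cancel, Units.val_one]
    have h2 := congrArg (fun z : 𝓞 K => ((algebraMap (𝓞 K) K z : K) : ℝ)) h1
    simp only [map_mul, map_one] at h2
    push_cast at h2
    exact h2
  exact key_struct' m hm hsf _ _ hxint hyint hxy hw (mem_repr m hm hsf K hK _)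

set_option maxHeartbeats 1000000 in
theorem four_smallest_fundamental_units
    (m : ℤ) (hm : 1 < m) (hsf : Squarefree m)
    (K : IntermediateField ℚ ℝ)
    (hK : K = IntermediateField.adjoin ℚ {Real.sqrt m})
    (v : (𝓞 K)ˣ) (hv : (1 : ℝ) < ((v : 𝓞 K) : K))
    (hfund : ∀ w : (𝓞 K)ˣ, ∃ k : ℤ, w = v ^ k ∨ w = -v ^ k) :
    (m = 5 → (((v : 𝓞 K) : K) : ℝ) = (1 + Real.sqrt 5) / 2) ∧
    (m = 2 → (((v : 𝓞 K) : K) : ℝ) = 1 + Real.sqrt 2) ∧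
    (m = 13 → (((v : 𝓞 K) : K) : ℝ) = (3 + Real.sqrt 13) / 2) ∧
    (m = 3 → (((v : 𝓞 K) : K) : ℝ) = 2 + Real.sqrt 3) ∧
    (m ≠ 2 → m ≠ 3 → m ≠ 5 → m ≠ 13 → (((v : 𝓞 K) : K) : ℝ) > 2 + Real.sqrt 3) := by
  refine ⟨?_, ?_, ?_, ?_, ?_⟩
  · -- m = 5
    rintro rfl
    have hc : ((5:ℤ):ℝ) = (5:ℝ) := by norm_num
    have hs0 : (0:ℝ) ≤ (5:ℝ) := by norm_num
    have hsq : Real.sqrt 5 ^ 2 = 5 := Real.sq_sqrt hs0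
    have hsnn : (0:ℝ) ≤ Real.sqrt 5 := Real.sqrt_nonneg 5
    have hs1 : (1:ℝ) < Real.sqrt 5 := by nlinarith
    obtain ⟨a, b, ha, hb, hrel, hx⟩ := key_struct 5 hm hsf K hK v hv
    rw [hc] at hx
    have haR : (1:ℝ) ≤ (a:ℝ) := by exact_mod_cast ha
    have hbR : (1:ℝ) ≤ (b:ℝ) := by exact_mod_cast hb
    have hlower : (1 + Real.sqrt 5) / 2 ≤ (((v : 𝓞 K) : K) : ℝ) := by
      rw [hx]; nlinarith
    obtain ⟨u, hu⟩ := exists_unit 5 hm K hK 1 1 (-1) (Or.inr rfl) (by norm_num)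
    rw [hc] at hu
    have hu1 : (1:ℝ) < (((u : 𝓞 K) : K) : ℝ) := by rw [hu]; push_cast; nlinarith
    have hupper := v_le K v hv hfund u hu1
    rw [hu] at hupper
    push_cast at hupper
    linarith
  · -- m = 2
    rintro rfl
    have hc : ((2:ℤ):ℝ) = (2:ℝ) := by norm_num
    have hs0 : (0:ℝ) ≤ (2:ℝ) := by norm_num
    have hsq : Real.sqrt 2 ^ 2 = 2 := Real.sq_sqrt hs0
    have hsnn : (0:ℝ) ≤ Real.sqrt 2 := Real.sqrt_nonneg 2
    have hs1 : (1:ℝ) < Real.sqrt 2 := by nlinarith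
    obtain ⟨a, b, ha, hb, hrel, hx⟩ := key_struct 2 hm hsf K hK v hv
    rw [hc] at hx
    -- a and b are even and ≥ 2
    have haeven : Even (a^2) := by
      rcases hrel with h | h
      · exact ⟨b^2 + 2, by linarith⟩
      · exact ⟨b^2 - 2, by linarith⟩
    have hae : Even a := (Int.even_pow.mp haeven).1
    obtain ⟨a', rfl⟩ := hae
    have hasq : (a' + a')^2 = 4*a'^2 := by ring
    have hbeven : Even (b^2) := by
      rcases hrel with h | h
      · exact ⟨a'^2 - 1, by nlinarith⟩
      · exact ⟨a'^2 + 1, by nlinarith⟩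
    have hbe : Even b := (Int.even_pow.mp hbeven).1
    obtain ⟨b', rfl⟩ := hbe
    have ha2 : 2 ≤ a' + a' := by omega
    have hb2 : 2 ≤ b' + b' := by omega
    have haR : (2:ℝ) ≤ ((a' + a' : ℤ):ℝ) := by exact_mod_cast ha2
    have hbR : (2:ℝ) ≤ ((b' + b' : ℤ):ℝ) := by exact_mod_cast hb2
    have hlower : 1 + Real.sqrt 2 ≤ (((v : 𝓞 K) : K) : ℝ) := by
      rw [hx]; nlinarith
    obtain ⟨u, hu⟩ := exists_unit 2 hm K hK 2 2 (-1) (Or.inr rfl) (by norm_num)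
    rw [hc] at hu
    have hu1 : (1:ℝ) < (((u : 𝓞 K) : K) : ℝ) := by rw [hu]; push_cast; nlinarith
    have hupper := v_le K v hv hfund u hu1
    rw [hu] at hupper
    push_cast at hupper
    linarith
  · -- m = 13
    rintro rfl
    have hc : ((13:ℤ):ℝ) = (13:ℝ) := by norm_num
    have hs0 : (0:ℝ) ≤ (13:ℝ) := by norm_num
    have hsq : Real.sqrt 13 ^ 2 = 13 := Real.sq_sqrt hs0
    have hsnn : (0:ℝ) ≤ Real.sqrt 13 := Real.sqrt_nonneg 13
    have hs1 : (1:ℝ) < Real.sqrt 13 := by nlinarith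
    obtain ⟨a, b, ha, hb, hrel, hx⟩ := key_struct 13 hm hsf K hK v hv
    rw [hc] at hx
    have hbsq : 1 ≤ b^2 := by nlinarith
    have ha3 : 3 ≤ a := by
      by_contra hcon
      push_neg at hcon
      interval_cases a <;> rcases hrel with h | h <;> linarith
    have haR : (3:ℝ) ≤ (a:ℝ) := by exact_mod_cast ha3
    have hbR : (1:ℝ) ≤ (b:ℝ) := by exact_mod_cast hb
    have hlower : (3 + Real.sqrt 13) / 2 ≤ (((v : 𝓞 K) : K) : ℝ) := by
      rw [hx]; nlinarith
    obtain ⟨u, hu⟩ := exists_unit 13 hm K hK 3 1 (-1) (Or.inr rfl) (by norm_num)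
    rw [hc] at hu
    have hu1 : (1:ℝ) < (((u : 𝓞 K) : K) : ℝ) := by rw [hu]; push_cast; nlinarith
    have hupper := v_le K v hv hfund u hu1
    rw [hu] at hupper
    push_cast at hupper
    linarith
  · -- m = 3
    rintro rfl
    have hc : ((3:ℤ):ℝ) = (3:ℝ) := by norm_num
    have hs0 : (0:ℝ) ≤ (3:ℝ) := by norm_num
    have hsq : Real.sqrt 3 ^ 2 = 3 := Real.sq_sqrt hs0
    have hsnn : (0:ℝ) ≤ Real.sqrt 3 := Real.sqrt_nonneg 3
    have hs1 : (1:ℝ) < Real.sqrt 3 := by nlinarith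
    obtain ⟨a, b, ha, hb, hrel, hx⟩ := key_struct 3 hm hsf K hK v hv
    rw [hc] at hx
    have hbsq : 1 ≤ b^2 := by nlinarith
    have ha4 : 4 ≤ a := by
      by_contra hcon
      push_neg at hcon
      obtain ⟨B, hB1, hBeq⟩ : ∃ B:ℤ, 1 ≤ B ∧ b^2 = B := ⟨b^2, hbsq, rfl⟩
      rw [hBeq] at hrel
      interval_cases a <;> rcases hrel with h | h <;> omega
    have hb2 : 2 ≤ b := by
      by_contra hcon
      push_neg at hcon
      have hb1 : b = 1 := by omega
      subst hb1
      have ha16 : 16 ≤ a^2 := by nlinarith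
      rcases hrel with h | h <;> omega
    have haR : (4:ℝ) ≤ (a:ℝ) := by exact_mod_cast ha4
    have hbR : (2:ℝ) ≤ (b:ℝ) := by exact_mod_cast hb2
    have hlower : 2 + Real.sqrt 3 ≤ (((v : 𝓞 K) : K) : ℝ) := by
      rw [hx]; nlinarith
    obtain ⟨u, hu⟩ := exists_unit 3 hm K hK 4 2 1 (Or.inl rfl) (by norm_num)
    rw [hc] at hu
    have hu1 : (1:ℝ) < (((u : 𝓞 K) : K) : ℝ) := by rw [hu]; push_cast; nlinarith
    have hupper := v_le K v hv hfund u hu1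
    rw [hu] at hupper
    push_cast at hupper
    linarith
  · -- general case
    intro hm2 hm3 hm5 hm13
    have hmR0 : (0:ℝ) ≤ (m:ℝ) := by positivity
    have hsqm : Real.sqrt m ^ 2 = (m:ℝ) := Real.sq_sqrt hmR0
    have hsnnm : (0:ℝ) ≤ Real.sqrt m := Real.sqrt_nonneg m
    have hs30 : (0:ℝ) ≤ (3:ℝ) := by norm_num
    have hsq3 : Real.sqrt 3 ^ 2 = 3 := Real.sq_sqrt hs30
    have hsnn3 : (0:ℝ) ≤ Real.sqrt 3 := Real.sqrt_nonneg 3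
    obtain ⟨a, b, ha, hb, hrel, hx⟩ := key_struct m hm hsf K hK v hv
    have hbsq : 1 ≤ b^2 := by nlinarith
    have hmge : 2 ≤ m := by omega
    -- squarefree exclusions
    have hnsf8 : m ≠ 8 := by
      intro h8
      have := hsf 2 (by rw [h8]; exact ⟨2, by norm_num⟩)
      rw [Int.isUnit_iff] at this
      omega
    have hnsf12 : m ≠ 12 := by
      intro h12
      have := hsf 2 (by rw [h12]; exact ⟨3, by norm_num⟩)
      rw [Int.isUnit_iff] at this
      omega
    -- b cases helper
    have hbcase : b = 1 ∨ 2 ≤ b := by omega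
    have hb4 : b = 1 ∨ 4 ≤ b^2 := by
      rcases hbcase with h | h
      · exact Or.inl h
      · right; nlinarith
    have hb9 : b = 1 ∨ b = 2 ∨ 9 ≤ b^2 := by
      rcases hbcase with h | h
      · exact Or.inl h
      · rcases eq_or_lt_of_le h with h' | h'
        · exact Or.inr (Or.inl h'.symm)
        · right; right; nlinarith
    have ha4 : 4 ≤ a := by
      by_contra hcon
      push_neg at hcon
      interval_cases a <;> rcases hrel with h | h
      · -- a = 1, m*b^2 = -3
        nlinarith
      · -- a = 1, m*b^2 = 5
        rcases hb4 with rfl | h4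
        · simp at h; omega
        · nlinarith
      · -- a = 2, m*b^2 = 0
        nlinarith
      · -- a = 2, m*b^2 = 8
        rcases hb9 with rfl | rfl | h9
        · simp at h; omega
        · have : m * 4 = 8 := by nlinarith
          omega
        · nlinarith
      · -- a = 3, m*b^2 = 5
        rcases hb4 with rfl | h4
        · simp at h; omega
        · nlinarith
      · -- a = 3, m*b^2 = 13
        rcases hb4 with rfl | h4
        · simp at h; omega
        · have hm4 : 4 * m ≤ 13 := by nlinarith
          omega
    -- now show m*b^2 ≥ 13
    have hmb : 13 ≤ m * b^2 := by
      rcases hrel with h | h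
      · -- m*b^2 = a^2 - 4
        have hcase : a = 4 ∨ 5 ≤ a := by omega
        rcases hcase with rfl | h5
        · exfalso
          have h12 : m * b^2 = 12 := by nlinarith
          rcases hb9 with rfl | rfl | h9
          · simp at h12; omega
          · have : m * 4 = 12 := by nlinarith
            omega
          · nlinarith
        · nlinarith
      · -- m*b^2 = a^2 + 4 ≥ 20
        nlinarith
    -- conclude
    have hmbR : (13:ℝ) ≤ (m:ℝ) * (b:ℝ)^2 := by exact_mod_cast hmb
    have haR : (4:ℝ) ≤ (a:ℝ) := by exact_mod_cast ha4
    have hbR : (1:ℝ) ≤ (b:ℝ) := by exact_mod_cast hb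
    have hgt : 2 * Real.sqrt 3 < (b:ℝ) * Real.sqrt m := by
      have htnn : (0:ℝ) ≤ (b:ℝ) * Real.sqrt m := by positivity
      have ht2 : ((b:ℝ) * Real.sqrt m)^2 = (b:ℝ)^2 * (m:ℝ) := by
        rw [mul_pow, hsqm]
      have hs2 : (2 * Real.sqrt 3)^2 = 12 := by rw [mul_pow, hsq3]; norm_num
      apply lt_of_pow_lt_pow_left₀ 2 htnn
      rw [ht2, hs2]
      nlinarith
    rw [hx]
    nlinarith
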